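/- Let Ω ⊆ ℝ^d be measurable with Lebesgue measure. Let ψ, φ : Ω → ℂ be differentiable with gradients ∇ψ, ∇φ, and let A : Ω → ℝ^d be measurable. Assume ∇ψ, ∇φ ∈ L²(Ω; ℂ^d), ψ, φ ∈ L²(Ω) ∩ L³(Ω) ∩ L⁶(Ω), A ∈ L⁶(Ω; ℝ^d), and that the integrand of B(A; ψ, φ) is integrable. Then |B(A; ψ, φ)| ≤ ‖∇ψ‖_{L²}·‖∇φ‖_{L²} + ‖A‖²_{L⁶}·‖ψ‖_{L⁶}·‖φ‖_{L²} + ‖A‖_{L⁶}·( ‖ψ‖_{L³}·‖∇φ‖_{L²} + ‖∇ψ‖_{L²}·‖φ‖_{L³} ). -/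

import Mathlib

open Complex ComplexConjugate MeasureTheory
open scoped ENNReal

noncomputable section

section Helpers

variable {X : Type*} [MeasurableSpace X] {μ : Measure X}

theorem memLp_rpow' {r : ℝ} (hr : 0 < r) {f : X → ℝ} (h0 : ∀ x, 0 ≤ f x)
    (hm : AEMeasurable f μ) (hi : Integrable (fun x => f x ^ r) μ) :
    MemLp f (ENNReal.ofReal r) μ := by
  have hne : ENNReal.ofReal r ≠ 0 := by simp [ENNReal.ofReal_eq_zero, not_le, hr]
  have hnt : ENNReal.ofReal r ≠ ⊤ := ENNReal.ofReal_ne_top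
  have h1 : MemLp (fun x => ‖f x‖ ^ (ENNReal.ofReal r).toReal)
      (ENNReal.ofReal r / ENNReal.ofReal r) μ := by
    rw [ENNReal.div_self hne hnt, memLp_one_iff_integrable]
    refine hi.congr (Filter.Eventually.of_forall fun x => ?_)
    simp only [Real.norm_of_nonneg (h0 x), ENNReal.toReal_ofReal hr.le]
  exact (memLp_norm_rpow_iff hm.aestronglyMeasurable hne hnt).mp h1

theorem integ_rpow_of_nat' {f : X → ℝ} {n : ℕ}
    (h : Integrable (fun x => f x ^ n) μ) {r : ℝ} (hr : r = n) :
    Integrable (fun x => f x ^ r) μ := by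
  subst hr
  refine h.congr (Filter.Eventually.of_forall fun x => ?_)
  exact (Real.rpow_natCast (f x) n).symm

theorem memLp_nat' {n : ℕ} {r : ℝ} (hr : r = n) (hrpos : 0 < r) {f : X → ℝ}
    (h0 : ∀ x, 0 ≤ f x) (hm : AEMeasurable f μ) (hi : Integrable (fun x => f x ^ n) μ) :
    MemLp f (ENNReal.ofReal r) μ :=
  memLp_rpow' hrpos h0 hm (integ_rpow_of_nat' hi hr)

theorem enn_div_eq' {a b c : ℝ} (ha : 0 < a) (hb : 0 < b) (hc : 0 < c) (h : 1/a = 1/b + 1/c) :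
    (1:ℝ≥0∞)/ENNReal.ofReal a = 1/ENNReal.ofReal b + 1/ENNReal.ofReal c := by
  rw [one_div, one_div, one_div, ← ENNReal.ofReal_inv_of_pos ha,
    ← ENNReal.ofReal_inv_of_pos hb, ← ENNReal.ofReal_inv_of_pos hc,
    ← ENNReal.ofReal_add (by positivity) (by positivity)]
  rw [one_div, one_div, one_div] at h
  rw [h]

theorem memLp_mul32' {g h : X → ℝ} (hg : MemLp g (ENNReal.ofReal 3) μ)
    (hh : MemLp h (ENNReal.ofReal 2) μ) :
    MemLp (fun x => g x * h x) (ENNReal.ofReal (6/5)) μ := by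
  have h1 : (1 : ℝ≥0∞) / ENNReal.ofReal (6/5)
      = 1 / ENNReal.ofReal 3 + 1 / ENNReal.ofReal 2 :=
    enn_div_eq' (by norm_num) (by norm_num) (by norm_num) (by norm_num)
  exact hh.smul hg (hpqr := ⟨by simp only [one_div] at h1; exact h1.symm⟩)

theorem integrable_mul3' {f g h : X → ℝ} (hf : MemLp f (ENNReal.ofReal 6) μ)
    (hg : MemLp g (ENNReal.ofReal 3) μ) (hh : MemLp h (ENNReal.ofReal 2) μ) :
    Integrable (fun x => f x * (g x * h x)) μ := by
  have hgh := memLp_mul32' hg hh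
  have h1 : (1 : ℝ≥0∞) / 1 = 1 / ENNReal.ofReal 6 + 1 / ENNReal.ofReal (6/5) := by
    have h0 := enn_div_eq' (a := 1) (b := 6) (c := 6/5) (by norm_num) (by norm_num)
      (by norm_num) (by norm_num)
    simpa using h0
  rw [← memLp_one_iff_integrable]
  exact hgh.smul hf (hpqr := ⟨by simp only [one_div] at h1; exact h1.symm⟩)

theorem integrable_mul2' {f g : X → ℝ} (hf : MemLp f (ENNReal.ofReal 2) μ)
    (hg : MemLp g (ENNReal.ofReal 2) μ) :
    Integrable (fun x => f x * g x) μ := by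
  have h1 : (1 : ℝ≥0∞) / 1 = 1 / ENNReal.ofReal 2 + 1 / ENNReal.ofReal 2 := by
    have h0 := enn_div_eq' (a := 1) (b := 2) (c := 2) (by norm_num) (by norm_num)
      (by norm_num) (by norm_num)
    simpa using h0
  rw [← memLp_one_iff_integrable]
  exact hg.smul hf (hpqr := ⟨by simp only [one_div] at h1; exact h1.symm⟩)

theorem holder2' (f g : X → ℝ) (hf0 : ∀ x, 0 ≤ f x) (hg0 : ∀ x, 0 ≤ g x)
    (hf : MemLp f (ENNReal.ofReal 2) μ) (hg : MemLp g (ENNReal.ofReal 2) μ) :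
    ∫ x, f x * g x ∂μ ≤ (∫ x, f x ^ (2:ℕ) ∂μ) ^ ((1:ℝ)/2) * (∫ x, g x ^ (2:ℕ) ∂μ) ^ ((1:ℝ)/2) := by
  have h := integral_mul_le_Lp_mul_Lq_of_nonneg (μ := μ) (Real.holderConjugate_iff.mpr ⟨by norm_num, by norm_num⟩)
    (Filter.Eventually.of_forall hf0) (Filter.Eventually.of_forall hg0) hf hg
  have e1 : ∫ x, f x ^ (2:ℝ) ∂μ = ∫ x, f x ^ (2:ℕ) ∂μ := by
    refine integral_congr_ae (Filter.Eventually.of_forall fun x => ?_)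
    show f x ^ (2:ℝ) = f x ^ (2:ℕ)
    rw [← Real.rpow_natCast (f x) 2]; norm_num
  have e2 : ∫ x, g x ^ (2:ℝ) ∂μ = ∫ x, g x ^ (2:ℕ) ∂μ := by
    refine integral_congr_ae (Filter.Eventually.of_forall fun x => ?_)
    show g x ^ (2:ℝ) = g x ^ (2:ℕ)
    rw [← Real.rpow_natCast (g x) 2]; norm_num
  rw [e1, e2] at h
  exact h

theorem holder3' (f g h : X → ℝ) (hf0 : ∀ x, 0 ≤ f x) (hg0 : ∀ x, 0 ≤ g x)
    (hh0 : ∀ x, 0 ≤ h x) (hgm : AEMeasurable g μ) (hhm : AEMeasurable h μ)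
    (hf : MemLp f (ENNReal.ofReal 6) μ) (hg : MemLp g (ENNReal.ofReal 3) μ)
    (hh : MemLp h (ENNReal.ofReal 2) μ)
    (hg3 : Integrable (fun x => g x ^ (3:ℕ)) μ) (hh2 : Integrable (fun x => h x ^ (2:ℕ)) μ) :
    ∫ x, f x * (g x * h x) ∂μ ≤ (∫ x, f x ^ (6:ℕ) ∂μ) ^ ((1:ℝ)/6) *
      ((∫ x, g x ^ (3:ℕ) ∂μ) ^ ((1:ℝ)/3) * (∫ x, h x ^ (2:ℕ) ∂μ) ^ ((1:ℝ)/2)) := by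
  have hgh0 : ∀ x, 0 ≤ g x * h x := fun x => mul_nonneg (hg0 x) (hh0 x)
  have step1 := integral_mul_le_Lp_mul_Lq_of_nonneg (μ := μ)
    (p := 6) (q := 6/5) (Real.holderConjugate_iff.mpr ⟨by norm_num, by norm_num⟩)
    (Filter.Eventually.of_forall hf0) (Filter.Eventually.of_forall hgh0) hf (memLp_mul32' hg hh)
  have e1 : ∫ x, f x ^ (6:ℝ) ∂μ = ∫ x, f x ^ (6:ℕ) ∂μ := by
    refine integral_congr_ae (Filter.Eventually.of_forall fun x => ?_)
    show f x ^ (6:ℝ) = f x ^ (6:ℕ)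
    rw [← Real.rpow_natCast (f x) 6]; norm_num
  rw [e1] at step1
  have hg' : MemLp (fun x => g x ^ ((6:ℝ)/5)) (ENNReal.ofReal (5/2)) μ := by
    refine memLp_rpow' (by norm_num) (fun x => Real.rpow_nonneg (hg0 x) _)
      (hgm.pow aemeasurable_const) ?_
    refine hg3.congr (Filter.Eventually.of_forall fun x => ?_)
    show g x ^ (3:ℕ) = (g x ^ ((6:ℝ)/5)) ^ ((5:ℝ)/2)
    rw [← Real.rpow_mul (hg0 x), ← Real.rpow_natCast (g x) 3]
    norm_num
  have hh' : MemLp (fun x => h x ^ ((6:ℝ)/5)) (ENNReal.ofReal (5/3)) μ := by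
    refine memLp_rpow' (by norm_num) (fun x => Real.rpow_nonneg (hh0 x) _)
      (hhm.pow aemeasurable_const) ?_
    refine hh2.congr (Filter.Eventually.of_forall fun x => ?_)
    show h x ^ (2:ℕ) = (h x ^ ((6:ℝ)/5)) ^ ((5:ℝ)/3)
    rw [← Real.rpow_mul (hh0 x), ← Real.rpow_natCast (h x) 2]
    norm_num
  have step2 := integral_mul_le_Lp_mul_Lq_of_nonneg (μ := μ)
    (p := 5/2) (q := 5/3) (Real.holderConjugate_iff.mpr ⟨by norm_num, by norm_num⟩)
    (Filter.Eventually.of_forall fun x => Real.rpow_nonneg (hg0 x) _)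
    (Filter.Eventually.of_forall fun x => Real.rpow_nonneg (hh0 x) _) hg' hh'
  have e2 : ∫ x, (g x ^ ((6:ℝ)/5)) ^ ((5:ℝ)/2) ∂μ = ∫ x, g x ^ (3:ℕ) ∂μ := by
    refine integral_congr_ae (Filter.Eventually.of_forall fun x => ?_)
    show (g x ^ ((6:ℝ)/5)) ^ ((5:ℝ)/2) = g x ^ (3:ℕ)
    rw [← Real.rpow_mul (hg0 x), ← Real.rpow_natCast (g x) 3]; norm_num
  have e3 : ∫ x, (h x ^ ((6:ℝ)/5)) ^ ((5:ℝ)/3) ∂μ = ∫ x, h x ^ (2:ℕ) ∂μ := by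
    refine integral_congr_ae (Filter.Eventually.of_forall fun x => ?_)
    show (h x ^ ((6:ℝ)/5)) ^ ((5:ℝ)/3) = h x ^ (2:ℕ)
    rw [← Real.rpow_mul (hh0 x), ← Real.rpow_natCast (h x) 2]; norm_num
  rw [e2, e3] at step2
  have e4 : ∫ x, (g x * h x) ^ ((6:ℝ)/5) ∂μ = ∫ x, g x ^ ((6:ℝ)/5) * h x ^ ((6:ℝ)/5) ∂μ := by
    refine integral_congr_ae (Filter.Eventually.of_forall fun x => ?_)
    exact Real.mul_rpow (hg0 x) (hh0 x)
  rw [e4] at step1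
  have hIg : 0 ≤ ∫ x, g x ^ (3:ℕ) ∂μ := integral_nonneg fun x => pow_nonneg (hg0 x) _
  have hIh : 0 ≤ ∫ x, h x ^ (2:ℕ) ∂μ := integral_nonneg fun x => pow_nonneg (hh0 x) _
  have hIf : 0 ≤ (∫ x, f x ^ (6:ℕ) ∂μ) ^ ((1:ℝ)/6) :=
    Real.rpow_nonneg (integral_nonneg fun x => pow_nonneg (hf0 x) _) _
  calc ∫ x, f x * (g x * h x) ∂μ
      ≤ (∫ x, f x ^ (6:ℕ) ∂μ) ^ ((1:ℝ)/6)
        * (∫ x, g x ^ ((6:ℝ)/5) * h x ^ ((6:ℝ)/5) ∂μ) ^ ((1:ℝ)/(6/5)) := step1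
    _ ≤ (∫ x, f x ^ (6:ℕ) ∂μ) ^ ((1:ℝ)/6)
        * (((∫ x, g x ^ (3:ℕ) ∂μ) ^ ((1:ℝ)/(5/2))
            * (∫ x, h x ^ (2:ℕ) ∂μ) ^ ((1:ℝ)/(5/3))) ^ ((1:ℝ)/(6/5))) := by
        refine mul_le_mul_of_nonneg_left ?_ hIf
        refine Real.rpow_le_rpow (integral_nonneg fun x => ?_) step2 (by norm_num)
        exact mul_nonneg (Real.rpow_nonneg (hg0 x) _) (Real.rpow_nonneg (hh0 x) _)
    _ = (∫ x, f x ^ (6:ℕ) ∂μ) ^ ((1:ℝ)/6)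
        * ((∫ x, g x ^ (3:ℕ) ∂μ) ^ ((1:ℝ)/3) * (∫ x, h x ^ (2:ℕ) ∂μ) ^ ((1:ℝ)/2)) := by
        rw [Real.mul_rpow (Real.rpow_nonneg hIg _) (Real.rpow_nonneg hIh _),
          ← Real.rpow_mul hIg, ← Real.rpow_mul hIh]
        norm_num

end Helpers

theorem vec_bound' {d : ℕ} (g : Fin d → ℂ) (c : ℂ) (Ax : Fin d → ℝ) :
    ‖(show EuclideanSpace ℂ (Fin d) from WithLp.toLp 2 fun j => Complex.I * g j + c * (Ax j : ℂ))‖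
      ≤ Real.sqrt (∑ j, Complex.normSq (g j))
        + ‖c‖ * Real.sqrt (∑ j, (Ax j) ^ 2) := by
  set G : EuclideanSpace ℂ (Fin d) := WithLp.toLp 2 fun j => Complex.I * g j with hG
  set W : EuclideanSpace ℂ (Fin d) := WithLp.toLp 2 fun j => c * (Ax j : ℂ) with hW
  have hsum : (show EuclideanSpace ℂ (Fin d) from WithLp.toLp 2 fun j => Complex.I * g j + c * (Ax j : ℂ))
      = G + W := by
    ext j
    simp [hG, hW, PiLp.add_apply]
  rw [hsum]
  refine (norm_add_le G W).trans ?_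
  have h1 : ‖G‖ = Real.sqrt (∑ j, Complex.normSq (g j)) := by
    rw [EuclideanSpace.norm_eq]
    congr 1
    refine Finset.sum_congr rfl fun j _ => ?_
    simp [hG, Complex.sq_norm, Complex.normSq_mul]
  have h2 : ‖W‖ = ‖c‖ * Real.sqrt (∑ j, (Ax j) ^ 2) := by
    rw [EuclideanSpace.norm_eq]
    have hww : ∀ j, ‖W j‖ ^ 2 = ‖c‖ ^ 2 * (Ax j) ^ 2 := by
      intro j
      simp [hW, mul_pow, Complex.sq_norm, Complex.normSq_mul, Complex.normSq_ofReal,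
        Complex.sq_norm (Ax j : ℂ)]
    rw [Finset.sum_congr rfl fun j _ => hww j, ← Finset.mul_sum,
      Real.sqrt_mul (by positivity), Real.sqrt_sq (norm_nonneg c)]
  rw [h1, h2]

theorem key_bound' {d : ℕ} (gψ gφ : Fin d → ℂ) (ψx φx : ℂ) (Ax : Fin d → ℝ) :
    ‖∑ j, (Complex.I * gψ j + ψx * (Ax j : ℂ))
        * conj (Complex.I * gφ j + φx * (Ax j : ℂ))‖
      ≤ (Real.sqrt (∑ j, Complex.normSq (gψ j)) + ‖ψx‖ * Real.sqrt (∑ j, (Ax j) ^ 2))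
        * (Real.sqrt (∑ j, Complex.normSq (gφ j))
            + ‖φx‖ * Real.sqrt (∑ j, (Ax j) ^ 2)) := by
  set U : EuclideanSpace ℂ (Fin d) := WithLp.toLp 2 fun j => Complex.I * gψ j + ψx * (Ax j : ℂ) with hU
  set V : EuclideanSpace ℂ (Fin d) := WithLp.toLp 2 fun j => Complex.I * gφ j + φx * (Ax j : ℂ) with hV
  have hinner : (inner ℂ V U : ℂ) = ∑ j, (Complex.I * gψ j + ψx * (Ax j : ℂ))
      * conj (Complex.I * gφ j + φx * (Ax j : ℂ)) := by
    rw [PiLp.inner_apply]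
    refine Finset.sum_congr rfl fun j _ => ?_
    simp [hU, hV, RCLike.inner_apply, mul_comm]
  rw [← hinner]
  refine (norm_inner_le_norm V U).trans ?_
  rw [mul_comm]
  exact mul_le_mul (vec_bound' gψ ψx Ax) (vec_bound' gφ φx Ax) (norm_nonneg _) (by positivity)

/-- The `j`-th component of the gradient of `f` on `Ω` (from the Fréchet derivative). -/
def gradW {d : ℕ} (Ω : Set (EuclideanSpace ℝ (Fin d)))
    (f : EuclideanSpace ℝ (Fin d) → ℂ) (x : EuclideanSpace ℝ (Fin d)) (j : Fin d) : ℂ :=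
  fderivWithin ℝ f Ω x (EuclideanSpace.single j 1)

/-- The integrand `⟨i∇ψ + ψA, i∇φ + φA⟩` of the magnetic form `B(A; ψ, φ)`. -/
def Bint {d : ℕ} (Ω : Set (EuclideanSpace ℝ (Fin d)))
    (A : EuclideanSpace ℝ (Fin d) → Fin d → ℝ)
    (ψ φ : EuclideanSpace ℝ (Fin d) → ℂ) (x : EuclideanSpace ℝ (Fin d)) : ℂ :=
  ∑ j, (Complex.I * gradW Ω ψ x j + ψ x * (A x j : ℂ))
      * conj (Complex.I * gradW Ω φ x j + φ x * (A x j : ℂ))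

/-- The magnetic sesquilinear form `B(A; ψ, φ) = ∫_Ω ⟨i∇ψ + ψA, i∇φ + φA⟩ dx`. -/
def Bform {d : ℕ} (Ω : Set (EuclideanSpace ℝ (Fin d)))
    (A : EuclideanSpace ℝ (Fin d) → Fin d → ℝ)
    (ψ φ : EuclideanSpace ℝ (Fin d) → ℂ) : ℂ :=
  ∫ x in Ω, Bint Ω A ψ φ x

/-- The continuity bound (4.7):
`|B(A; ψ, φ)| ≤ ‖∇ψ‖_{L²}‖∇φ‖_{L²} + ‖A‖²_{L⁶}‖ψ‖_{L⁶}‖φ‖_{L²}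
  + ‖A‖_{L⁶}(‖ψ‖_{L³}‖∇φ‖_{L²} + ‖∇ψ‖_{L²}‖φ‖_{L³})`. -/
theorem stmt11 (d : ℕ) (Ω : Set (EuclideanSpace ℝ (Fin d))) (hΩ : MeasurableSet Ω)
    (ψ φ : EuclideanSpace ℝ (Fin d) → ℂ)
    (A : EuclideanSpace ℝ (Fin d) → Fin d → ℝ)
    (hψd : DifferentiableOn ℝ ψ Ω) (hφd : DifferentiableOn ℝ φ Ω) (hA : Measurable A)
    (hGψ : Integrable (fun x => ∑ j, Complex.normSq (gradW Ω ψ x j)) (volume.restrict Ω))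
    (hGφ : Integrable (fun x => ∑ j, Complex.normSq (gradW Ω φ x j)) (volume.restrict Ω))
    (hψ2 : Integrable (fun x => ‖ψ x‖ ^ (2 : ℕ)) (volume.restrict Ω))
    (hψ3 : Integrable (fun x => ‖ψ x‖ ^ (3 : ℕ)) (volume.restrict Ω))
    (hψ6 : Integrable (fun x => ‖ψ x‖ ^ (6 : ℕ)) (volume.restrict Ω))
    (hφ2 : Integrable (fun x => ‖φ x‖ ^ (2 : ℕ)) (volume.restrict Ω))
    (hφ3 : Integrable (fun x => ‖φ x‖ ^ (3 : ℕ)) (volume.restrict Ω))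
    (hφ6 : Integrable (fun x => ‖φ x‖ ^ (6 : ℕ)) (volume.restrict Ω))
    (hA6 : Integrable (fun x => Real.sqrt (∑ j, (A x j) ^ 2) ^ (6 : ℕ)) (volume.restrict Ω))
    (hB : Integrable (Bint Ω A ψ φ) (volume.restrict Ω)) :
    ‖Bform Ω A ψ φ‖
      ≤ (∫ x in Ω, ∑ j, Complex.normSq (gradW Ω ψ x j)) ^ ((1 : ℝ) / 2)
          * (∫ x in Ω, ∑ j, Complex.normSq (gradW Ω φ x j)) ^ ((1 : ℝ) / 2)
        + ((∫ x in Ω, Real.sqrt (∑ j, (A x j) ^ 2) ^ (6 : ℕ)) ^ ((1 : ℝ) / 6)) ^ (2 : ℕ)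
          * (∫ x in Ω, ‖ψ x‖ ^ (6 : ℕ)) ^ ((1 : ℝ) / 6)
          * (∫ x in Ω, ‖φ x‖ ^ (2 : ℕ)) ^ ((1 : ℝ) / 2)
        + (∫ x in Ω, Real.sqrt (∑ j, (A x j) ^ 2) ^ (6 : ℕ)) ^ ((1 : ℝ) / 6)
          * ((∫ x in Ω, ‖ψ x‖ ^ (3 : ℕ)) ^ ((1 : ℝ) / 3)
              * (∫ x in Ω, ∑ j, Complex.normSq (gradW Ω φ x j)) ^ ((1 : ℝ) / 2)
            + (∫ x in Ω, ∑ j, Complex.normSq (gradW Ω ψ x j)) ^ ((1 : ℝ) / 2)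
              * (∫ x in Ω, ‖φ x‖ ^ (3 : ℕ)) ^ ((1 : ℝ) / 3)) := by
  classical
  set μ := volume.restrict Ω with hμ
  set Gψ : EuclideanSpace ℝ (Fin d) → ℝ :=
    fun x => Real.sqrt (∑ j, Complex.normSq (gradW Ω ψ x j)) with hGψdef
  set Gφ : EuclideanSpace ℝ (Fin d) → ℝ :=
    fun x => Real.sqrt (∑ j, Complex.normSq (gradW Ω φ x j)) with hGφdef
  set a : EuclideanSpace ℝ (Fin d) → ℝ := fun x => Real.sqrt (∑ j, (A x j) ^ 2) with hadef
  set P : EuclideanSpace ℝ (Fin d) → ℝ := fun x => ‖ψ x‖ with hPdef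
  set Q : EuclideanSpace ℝ (Fin d) → ℝ := fun x => ‖φ x‖ with hQdef
  -- nonnegativity
  have hGψ0 : ∀ x, 0 ≤ Gψ x := fun x => Real.sqrt_nonneg _
  have hGφ0 : ∀ x, 0 ≤ Gφ x := fun x => Real.sqrt_nonneg _
  have ha0 : ∀ x, 0 ≤ a x := fun x => Real.sqrt_nonneg _
  have hP0 : ∀ x, 0 ≤ P x := fun x => norm_nonneg _
  have hQ0 : ∀ x, 0 ≤ Q x := fun x => norm_nonneg _
  -- measurability
  have hGψm : AEMeasurable Gψ μ :=
    Real.continuous_sqrt.measurable.comp_aemeasurable hGψ.1.aemeasurable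
  have hGφm : AEMeasurable Gφ μ :=
    Real.continuous_sqrt.measurable.comp_aemeasurable hGφ.1.aemeasurable
  have ham : AEMeasurable a μ := by
    have h1 : Measurable fun x => ∑ j, (A x j) ^ 2 :=
      Finset.measurable_sum _ fun j _ => ((measurable_pi_apply j).comp hA).pow_const 2
    exact (Real.continuous_sqrt.measurable.comp h1).aemeasurable
  have hPm : AEMeasurable P μ := by
    have h1 : AEMeasurable (fun x => Real.sqrt (‖ψ x‖ ^ (2:ℕ))) μ :=
      Real.continuous_sqrt.measurable.comp_aemeasurable hψ2.1.aemeasurable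
    refine h1.congr (Filter.Eventually.of_forall fun x => ?_)
    exact Real.sqrt_sq (norm_nonneg _)
  have hQm : AEMeasurable Q μ := by
    have h1 : AEMeasurable (fun x => Real.sqrt (‖φ x‖ ^ (2:ℕ))) μ :=
      Real.continuous_sqrt.measurable.comp_aemeasurable hφ2.1.aemeasurable
    refine h1.congr (Filter.Eventually.of_forall fun x => ?_)
    exact Real.sqrt_sq (norm_nonneg _)
  -- integrability of powers
  have hGψ2 : Integrable (fun x => Gψ x ^ (2:ℕ)) μ := by
    refine hGψ.congr (Filter.Eventually.of_forall fun x => ?_)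
    exact (Real.sq_sqrt (Finset.sum_nonneg fun j _ => Complex.normSq_nonneg _)).symm
  have hGφ2 : Integrable (fun x => Gφ x ^ (2:ℕ)) μ := by
    refine hGφ.congr (Filter.Eventually.of_forall fun x => ?_)
    exact (Real.sq_sqrt (Finset.sum_nonneg fun j _ => Complex.normSq_nonneg _)).symm
  have ha6' : Integrable (fun x => a x ^ (6:ℕ)) μ := hA6
  have ha2cube : Integrable (fun x => (a x ^ (2:ℕ)) ^ (3:ℕ)) μ := by
    refine hA6.congr (Filter.Eventually.of_forall fun x => ?_)
    ring
  -- MemLp facts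
  have MGψ : MemLp Gψ (ENNReal.ofReal 2) μ :=
    memLp_nat' (n := 2) (by norm_num) (by norm_num) hGψ0 hGψm hGψ2
  have MGφ : MemLp Gφ (ENNReal.ofReal 2) μ :=
    memLp_nat' (n := 2) (by norm_num) (by norm_num) hGφ0 hGφm hGφ2
  have MP6 : MemLp P (ENNReal.ofReal 6) μ :=
    memLp_nat' (n := 6) (by norm_num) (by norm_num) hP0 hPm hψ6
  have MP3 : MemLp P (ENNReal.ofReal 3) μ :=
    memLp_nat' (n := 3) (by norm_num) (by norm_num) hP0 hPm hψ3
  have MQ2 : MemLp Q (ENNReal.ofReal 2) μ :=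
    memLp_nat' (n := 2) (by norm_num) (by norm_num) hQ0 hQm hφ2
  have MQ3 : MemLp Q (ENNReal.ofReal 3) μ :=
    memLp_nat' (n := 3) (by norm_num) (by norm_num) hQ0 hQm hφ3
  have Ma6 : MemLp a (ENNReal.ofReal 6) μ :=
    memLp_nat' (n := 6) (by norm_num) (by norm_num) ha0 ham ha6'
  have Ma2 : MemLp (fun x => a x ^ (2:ℕ)) (ENNReal.ofReal 3) μ :=
    memLp_nat' (n := 3) (by norm_num) (by norm_num) (fun x => pow_nonneg (ha0 x) _)
      (ham.pow_const 2) ha2cube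
  -- pointwise bound
  have hpt : ∀ x, ‖Bint Ω A ψ φ x‖
      ≤ Gψ x * Gφ x + (P x * (a x ^ (2:ℕ) * Q x)
        + (a x * (P x * Gφ x) + a x * (Q x * Gψ x))) := by
    intro x
    have h := key_bound' (gradW Ω ψ x) (gradW Ω φ x) (ψ x) (φ x) (A x)
    refine le_trans h (le_of_eq ?_)
    simp only [hGψdef, hGφdef, hadef, hPdef, hQdef]
    have : Real.sqrt (∑ j, (A x j) ^ 2) ^ (2:ℕ) = ∑ j, (A x j) ^ 2 :=
      Real.sq_sqrt (Finset.sum_nonneg fun j _ => sq_nonneg _)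
    nlinarith [this]
  -- integrability of majorant pieces
  have it1 : Integrable (fun x => Gψ x * Gφ x) μ := integrable_mul2' MGψ MGφ
  have it2 : Integrable (fun x => P x * (a x ^ (2:ℕ) * Q x)) μ := integrable_mul3' MP6 Ma2 MQ2
  have it3 : Integrable (fun x => a x * (P x * Gφ x)) μ := integrable_mul3' Ma6 MP3 MGφ
  have it4 : Integrable (fun x => a x * (Q x * Gψ x)) μ := integrable_mul3' Ma6 MQ3 MGψ
  -- Hölder bounds
  have h1 := holder2' (μ := μ) Gψ Gφ hGψ0 hGφ0 MGψ MGφ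
  have h2 := holder3' (μ := μ) P (fun x => a x ^ (2:ℕ)) Q hP0
    (fun x => pow_nonneg (ha0 x) _) hQ0 (ham.pow_const 2) hQm MP6 Ma2 MQ2 ha2cube hφ2
  have h3 := holder3' (μ := μ) a P Gφ ha0 hP0 hGφ0 hPm hGφm Ma6 MP3 MGφ hψ3 hGφ2
  have h4 := holder3' (μ := μ) a Q Gψ ha0 hQ0 hGψ0 hQm hGψm Ma6 MQ3 MGψ hφ3 hGψ2
  -- overall bound on |Bform|
  have habs : ‖Bform Ω A ψ φ‖ ≤ ∫ x, ‖Bint Ω A ψ φ x‖ ∂μ := by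
    exact norm_integral_le_integral_norm _
  have hmono : ∫ x, ‖Bint Ω A ψ φ x‖ ∂μ
      ≤ ∫ x, (Gψ x * Gφ x + (P x * (a x ^ (2:ℕ) * Q x)
        + (a x * (P x * Gφ x) + a x * (Q x * Gψ x)))) ∂μ :=
    integral_mono hB.norm (it1.add (it2.add (it3.add it4))) hpt
  have it34 : Integrable (fun x => a x * (P x * Gφ x) + a x * (Q x * Gψ x)) μ := it3.add it4
  have it234 : Integrable (fun x => P x * (a x ^ (2:ℕ) * Q x)
      + (a x * (P x * Gφ x) + a x * (Q x * Gψ x))) μ := it2.add it34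
  have hsplit : ∫ x, (Gψ x * Gφ x + (P x * (a x ^ (2:ℕ) * Q x)
        + (a x * (P x * Gφ x) + a x * (Q x * Gψ x)))) ∂μ
      = (∫ x, Gψ x * Gφ x ∂μ) + ((∫ x, P x * (a x ^ (2:ℕ) * Q x) ∂μ)
        + ((∫ x, a x * (P x * Gφ x) ∂μ) + (∫ x, a x * (Q x * Gψ x) ∂μ))) := by
    rw [integral_add it1 it234, integral_add it2 it34, integral_add it3 it4]
  -- rewrite squared integrals back to the statement's form
  have EGψ : ∫ x, Gψ x ^ (2:ℕ) ∂μ = ∫ x, (∑ j, Complex.normSq (gradW Ω ψ x j)) ∂μ := by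
    refine integral_congr_ae (Filter.Eventually.of_forall fun x => ?_)
    exact Real.sq_sqrt (Finset.sum_nonneg fun j _ => Complex.normSq_nonneg _)
  have EGφ : ∫ x, Gφ x ^ (2:ℕ) ∂μ = ∫ x, (∑ j, Complex.normSq (gradW Ω φ x j)) ∂μ := by
    refine integral_congr_ae (Filter.Eventually.of_forall fun x => ?_)
    exact Real.sq_sqrt (Finset.sum_nonneg fun j _ => Complex.normSq_nonneg _)
  have Ea : ∫ x, (a x ^ (2:ℕ)) ^ (3:ℕ) ∂μ = ∫ x, Real.sqrt (∑ j, (A x j) ^ 2) ^ (6:ℕ) ∂μ := by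
    refine integral_congr_ae (Filter.Eventually.of_forall fun x => ?_)
    show (a x ^ (2:ℕ)) ^ (3:ℕ) = a x ^ (6:ℕ)
    ring
  rw [EGψ, EGφ] at h1
  rw [Ea] at h2
  rw [EGφ] at h3
  rw [EGψ] at h4
  -- convert the a-exponent
  have hS6a0 : 0 ≤ ∫ x, Real.sqrt (∑ j, (A x j) ^ 2) ^ (6:ℕ) ∂μ :=
    integral_nonneg fun x => pow_nonneg (Real.sqrt_nonneg _) _
  have hexp : ((∫ x, Real.sqrt (∑ j, (A x j) ^ 2) ^ (6:ℕ) ∂μ) ^ ((1:ℝ)/6)) ^ (2:ℕ)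
      = (∫ x, Real.sqrt (∑ j, (A x j) ^ 2) ^ (6:ℕ) ∂μ) ^ ((1:ℝ)/3) := by
    rw [← Real.rpow_natCast ((∫ x, Real.sqrt (∑ j, (A x j) ^ 2) ^ (6:ℕ) ∂μ) ^ ((1:ℝ)/6)) 2,
      ← Real.rpow_mul hS6a0]
    norm_num
  refine habs.trans (hmono.trans (hsplit.le.trans ?_))
  rw [hexp]
  simp only [hGψdef, hGφdef, hadef, hPdef, hQdef] at h1 h2 h3 h4 ⊢
  nlinarith [h1, h2, h3, h4]

end
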